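/- Let K be a field, let N ≥ r ≥ 1 be integers, and let z_1,…,z_N ∈ K be pairwise distinct and nonzero. Let λ = (λ_1 ≥ … ≥ λ_r ≥ 0) be a partition and d ≥ 0 an integer, and set f_i(z) = z^d (1 − z^{-1})^{λ_i + r − i} for 1 ≤ i ≤ r. Then Σ_{I ⊆ {1,…,N}, |I| = r} G_λ( (1 − z_i^{-1})_{i∈I} ) · ∏_{i∈I} ( z_i^{N−r+d} / ∏_{j∉I} (z_i − z_j) ) = s_{(f_1,…,f_r)}(z_1,…,z_N). -/

import Mathlib

open Finset Equiv Matrix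

lemma prodIoi_ite {K : Type*} [CommMonoid K] {n : ℕ} (i : Fin n) (f : Fin n → K) :
    ∏ j ∈ Finset.Ioi i, f j = ∏ j : Fin n, if i < j then f j else 1 := by
  rw [← Finset.prod_filter]
  congr 1
  ext x; simp

lemma pairProd_reindex_rev {K : Type*} [CommMonoid K] {n : ℕ} (F : Fin n → Fin n → K) :
    ∏ i : Fin n, ∏ j ∈ Finset.Ioi i, F (Fin.rev j) (Fin.rev i)
      = ∏ i : Fin n, ∏ j ∈ Finset.Ioi i, F i j := by
  rw [Finset.prod_sigma' (Finset.univ) (fun i => Finset.Ioi i) (fun i j => F (Fin.rev j) (Fin.rev i)),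
    Finset.prod_sigma' (Finset.univ) (fun i => Finset.Ioi i) (fun i j => F i j)]
  refine Finset.prod_nbij' (fun p => ⟨Fin.rev p.2, Fin.rev p.1⟩)
    (fun p => ⟨Fin.rev p.2, Fin.rev p.1⟩) ?_ ?_ ?_ ?_ ?_
  · rintro ⟨i, j⟩ h
    simp only [Finset.mem_sigma, Finset.mem_univ, Finset.mem_Ioi, true_and] at h ⊢
    exact Fin.rev_lt_rev.mpr h
  · rintro ⟨i, j⟩ h
    simp only [Finset.mem_sigma, Finset.mem_univ, Finset.mem_Ioi, true_and] at h ⊢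
    exact Fin.rev_lt_rev.mpr h
  · rintro ⟨i, j⟩ _; simp [Fin.rev_rev]
  · rintro ⟨i, j⟩ _; simp [Fin.rev_rev]
  · rintro ⟨i, j⟩ _; simp

lemma det_rev_vandermonde {K : Type*} [CommRing K] {n : ℕ} (v : Fin n → K) :
    Matrix.det (Matrix.of fun i j : Fin n => v j ^ (n - 1 - (i : ℕ))) =
      ∏ i : Fin n, ∏ j ∈ Finset.Ioi i, (v i - v j) := by
  have h1 : (Matrix.of fun i j : Fin n => v j ^ (n - 1 - (i : ℕ)))
      = ((Matrix.vandermonde (v ∘ Fin.rev))ᵀ).submatrix ⇑(Fin.revPerm) ⇑(Fin.revPerm) := by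
    ext i j
    simp [Matrix.vandermonde, Fin.rev_rev, Fin.val_rev]
    congr 1
    omega
  rw [h1, Matrix.det_submatrix_equiv_self, Matrix.det_transpose, Matrix.det_vandermonde]
  rw [← pairProd_reindex_rev (fun i j => v i - v j)]
  refine Finset.prod_congr rfl fun i _ => Finset.prod_congr rfl fun j _ => ?_
  simp [Function.comp]

lemma prod_pair_mul {K : Type*} [CommMonoid K] {n : ℕ} (u : Fin n → K) :
    ∏ i : Fin n, ∏ j ∈ Finset.Ioi i, (u i * u j) = ∏ i : Fin n, u i ^ (n - 1) := by
  have h1 : ∏ i : Fin n, ∏ j ∈ Finset.Ioi i, (u i * u j)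
      = (∏ i : Fin n, ∏ _j ∈ Finset.Ioi i, u i) * ∏ i : Fin n, ∏ j ∈ Finset.Ioi i, u j := by
    rw [← Finset.prod_mul_distrib]
    exact Finset.prod_congr rfl fun i _ => Finset.prod_mul_distrib
  have h2 : ∏ i : Fin n, ∏ j ∈ Finset.Ioi i, u j
      = ∏ j : Fin n, ∏ _i ∈ Finset.Iio j, u j := by
    exact Finset.prod_comm' (by simp)
  rw [h1, h2]
  rw [← Finset.prod_mul_distrib]
  refine Finset.prod_congr rfl fun i _ => ?_
  rw [Finset.prod_const, Finset.prod_const, Fin.card_Ioi, Fin.card_Iio, ← pow_add]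
  congr 1
  omega

lemma prodIoi_ite' {K : Type*} [CommMonoid K] {n : ℕ} (i : Fin n) (f : Fin n → K) :
    ∏ j ∈ Finset.Ioi i, f j = ∏ j : Fin n, if i < j then f j else 1 := by
  rw [← Finset.prod_filter]
  congr 1
  ext x; simp

lemma prod_pairs_add {K : Type*} [CommMonoid K] (r s : ℕ) (F : Fin (r+s) → Fin (r+s) → K) :
    ∏ i : Fin (r+s), ∏ j ∈ Finset.Ioi i, F i j =
      ((∏ a : Fin r, ∏ b ∈ Finset.Ioi a, F (Fin.castAdd s a) (Fin.castAdd s b)) *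
       (∏ a : Fin s, ∏ b ∈ Finset.Ioi a, F (Fin.natAdd r a) (Fin.natAdd r b))) *
       ∏ a : Fin r, ∏ b : Fin s, F (Fin.castAdd s a) (Fin.natAdd r b) := by
  simp only [prodIoi_ite']
  rw [Fin.prod_univ_add (f := fun i => ∏ j : Fin (r+s), if i < j then F i j else 1)]
  have top : ∀ a : Fin r, (∏ j : Fin (r+s), if (Fin.castAdd s a) < j then F (Fin.castAdd s a) j else 1)
      = (∏ b : Fin r, if a < b then F (Fin.castAdd s a) (Fin.castAdd s b) else 1) *
        ∏ b : Fin s, F (Fin.castAdd s a) (Fin.natAdd r b) := by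
    intro a
    rw [Fin.prod_univ_add (f := fun j => if (Fin.castAdd s a) < j then F (Fin.castAdd s a) j else 1)]
    refine congr_arg₂ (· * ·) ?_ ?_
    · refine Finset.prod_congr rfl fun b _ => if_congr ?_ rfl rfl
      simp only [Fin.lt_def, Fin.coe_castAdd]
    · exact Finset.prod_congr rfl fun b _ =>
        if_pos (by have := a.isLt; simp only [Fin.lt_def, Fin.coe_castAdd, Fin.coe_natAdd]; omega)
  have bot : ∀ a : Fin s, (∏ j : Fin (r+s), if (Fin.natAdd r a) < j then F (Fin.natAdd r a) j else 1)
      = ∏ b : Fin s, if a < b then F (Fin.natAdd r a) (Fin.natAdd r b) else 1 := by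
    intro a
    rw [Fin.prod_univ_add (f := fun j => if (Fin.natAdd r a) < j then F (Fin.natAdd r a) j else 1)]
    have h0 : ∀ b : Fin r, (if (Fin.natAdd r a) < (Fin.castAdd s b) then F (Fin.natAdd r a) (Fin.castAdd s b) else 1) = 1 := fun b =>
      if_neg (by have := b.isLt; simp only [Fin.lt_def, Fin.coe_castAdd, Fin.coe_natAdd]; omega)
    rw [Finset.prod_congr rfl fun b _ => h0 b, Finset.prod_const_one, one_mul]
    refine Finset.prod_congr rfl fun b _ => if_congr ?_ rfl rfl
    simp only [Fin.lt_def, Fin.coe_natAdd]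
    omega
  rw [Finset.prod_congr rfl fun a _ => top a, Finset.prod_congr rfl fun a _ => bot a,
    Finset.prod_mul_distrib]
  exact mul_right_comm _ _ _

lemma lap_compl_card {r s : ℕ} (I : Finset (Fin (r+s))) (hI : I.card = r) : Iᶜ.card = s := by
  rw [Finset.card_compl, hI, Fintype.card_fin]; omega

/-- The equivalence `Fin r ⊕ Fin s ≃ Fin (r+s)` sending `inl` to `I` (in order) and
`inr` to `Iᶜ` (in order). -/
noncomputable def lapKappa {r s : ℕ} (I : Finset (Fin (r+s))) (hI : I.card = r) :
    (Fin r ⊕ Fin s) ≃ Fin (r+s) :=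
  (Equiv.sumCongr (I.orderIsoOfFin hI).toEquiv
      (Iᶜ.orderIsoOfFin (lap_compl_card I hI)).toEquiv).trans
    ((Equiv.sumCongr (Equiv.refl _)
        (Equiv.subtypeEquivRight (fun x => Finset.mem_compl))).trans
      (Equiv.sumCompl (· ∈ I)))

@[simp] lemma lapKappa_inl {r s : ℕ} (I : Finset (Fin (r+s))) (hI : I.card = r) (a : Fin r) :
    lapKappa I hI (Sum.inl a) = ↑(I.orderIsoOfFin hI a) := rfl

@[simp] lemma lapKappa_inr {r s : ℕ} (I : Finset (Fin (r+s))) (hI : I.card = r) (b : Fin s) :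
    lapKappa I hI (Sum.inr b) = ↑(Iᶜ.orderIsoOfFin (lap_compl_card I hI) b) := rfl

/-- The shuffle permutation attached to `I`. -/
noncomputable def lapPerm {r s : ℕ} (I : Finset (Fin (r+s))) (hI : I.card = r) :
    Equiv.Perm (Fin (r+s)) :=
  finSumFinEquiv.symm.trans (lapKappa I hI)

noncomputable def lapPhi {r s : ℕ} (I : Finset (Fin (r+s))) (hI : I.card = r)
    (τ : Equiv.Perm (Fin r)) (ρ : Equiv.Perm (Fin s)) : Equiv.Perm (Fin (r+s)) :=
  finSumFinEquiv.symm.trans ((Equiv.sumCongr τ ρ).trans (lapKappa I hI))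

@[simp] lemma lapPhi_castAdd {r s : ℕ} (I : Finset (Fin (r+s))) (hI : I.card = r)
    (τ : Equiv.Perm (Fin r)) (ρ : Equiv.Perm (Fin s)) (a : Fin r) :
    lapPhi I hI τ ρ (Fin.castAdd s a) = ↑(I.orderIsoOfFin hI (τ a)) := by
  simp [lapPhi, finSumFinEquiv_symm_apply_castAdd]

@[simp] lemma lapPhi_natAdd {r s : ℕ} (I : Finset (Fin (r+s))) (hI : I.card = r)
    (τ : Equiv.Perm (Fin r)) (ρ : Equiv.Perm (Fin s)) (b : Fin s) :
    lapPhi I hI τ ρ (Fin.natAdd r b) = ↑(Iᶜ.orderIsoOfFin (lap_compl_card I hI) (ρ b)) := by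
  simp [lapPhi, finSumFinEquiv_symm_apply_natAdd]

lemma sign_lapPhi {r s : ℕ} (I : Finset (Fin (r+s))) (hI : I.card = r)
    (τ : Equiv.Perm (Fin r)) (ρ : Equiv.Perm (Fin s)) :
    Equiv.Perm.sign (lapPhi I hI τ ρ) =
      Equiv.Perm.sign (lapPerm I hI) * Equiv.Perm.sign τ * Equiv.Perm.sign ρ := by
  have h : lapPhi I hI τ ρ =
      (lapPerm I hI) * (Equiv.permCongr finSumFinEquiv (Equiv.sumCongr τ ρ)) := by
    ext x
    simp [lapPhi, lapPerm, Equiv.permCongr, Equiv.Perm.mul_apply]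
  rw [h, _root_.map_mul, Equiv.Perm.sign_permCongr, Equiv.Perm.sign_sumCongr]
  exact (mul_assoc _ _ _).symm

lemma lapPhi_image {r s : ℕ} (I : Finset (Fin (r+s))) (hI : I.card = r)
    (τ : Equiv.Perm (Fin r)) (ρ : Equiv.Perm (Fin s)) :
    Finset.image (fun a : Fin r => lapPhi I hI τ ρ (Fin.castAdd s a)) Finset.univ = I := by
  have hsub : Finset.image (fun a : Fin r => lapPhi I hI τ ρ (Fin.castAdd s a)) Finset.univ ⊆ I := by
    intro x hx
    rcases Finset.mem_image.mp hx with ⟨a, _, rfl⟩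
    rw [lapPhi_castAdd]
    exact (I.orderIsoOfFin hI (τ a)).2
  refine Finset.eq_of_subset_of_card_le hsub ?_
  have hinj : Function.Injective (fun a : Fin r => lapPhi I hI τ ρ (Fin.castAdd s a)) :=
    fun a b hab => (Fin.castAdd_injective r s) ((lapPhi I hI τ ρ).injective hab)
  rw [Finset.card_image_of_injective _ hinj]
  simp [hI]

lemma lapPhi_injective {r s : ℕ} :
    Function.Injective
      (fun t : Σ _I : {x // x ∈ Finset.powersetCard r (Finset.univ : Finset (Fin (r+s)))},
          Equiv.Perm (Fin r) × Equiv.Perm (Fin s) =>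
        lapPhi t.1.1 (Finset.mem_powersetCard.mp t.1.2).2 t.2.1 t.2.2) := by
  rintro ⟨⟨I₁, hm₁⟩, τ₁, ρ₁⟩ ⟨⟨I₂, hm₂⟩, τ₂, ρ₂⟩ h
  simp only at h
  have hI₁ := (Finset.mem_powersetCard.mp hm₁).2
  have hI₂ := (Finset.mem_powersetCard.mp hm₂).2
  have hII : I₁ = I₂ := by
    rw [← lapPhi_image I₁ hI₁ τ₁ ρ₁, ← lapPhi_image I₂ hI₂ τ₂ ρ₂, h]
  subst hII
  have hiotaI : Function.Injective (fun a : Fin r => (↑(I₁.orderIsoOfFin hI₁ a) : Fin (r+s))) :=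
    fun a b hab => (I₁.orderIsoOfFin hI₁).injective (Subtype.ext hab)
  have hiotaC : Function.Injective
      (fun b : Fin s => (↑(I₁ᶜ.orderIsoOfFin (lap_compl_card I₁ hI₁) b) : Fin (r+s))) :=
    fun a b hab => (I₁ᶜ.orderIsoOfFin (lap_compl_card I₁ hI₁)).injective (Subtype.ext hab)
  have hτ : τ₁ = τ₂ := by
    ext a
    have := congrFun (congrArg (fun (e : Equiv.Perm (Fin (r+s))) => (e : Fin (r+s) → Fin (r+s)))
      h) (Fin.castAdd s a)
    simp only [lapPhi_castAdd] at this
    exact congrArg Fin.val (hiotaI this)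
  have hρ : ρ₁ = ρ₂ := by
    ext b
    have := congrFun (congrArg (fun (e : Equiv.Perm (Fin (r+s))) => (e : Fin (r+s) → Fin (r+s)))
      h) (Fin.natAdd r b)
    simp only [lapPhi_natAdd] at this
    exact congrArg Fin.val (hiotaC this)
  subst hτ; subst hρ
  rfl

lemma lapPhi_bijective {r s : ℕ} :
    Function.Bijective
      (fun t : Σ _I : {x // x ∈ Finset.powersetCard r (Finset.univ : Finset (Fin (r+s)))},
          Equiv.Perm (Fin r) × Equiv.Perm (Fin s) =>
        lapPhi t.1.1 (Finset.mem_powersetCard.mp t.1.2).2 t.2.1 t.2.2) := by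
  rw [Fintype.bijective_iff_injective_and_card]
  refine ⟨lapPhi_injective, ?_⟩
  rw [Fintype.card_sigma]
  simp only [Fintype.card_prod, Fintype.card_perm, Fintype.card_fin, Finset.sum_const,
    smul_eq_mul, Fintype.card_coe, Finset.card_powersetCard, Finset.card_univ, Fintype.card_fin]
  have := Nat.choose_mul_factorial_mul_factorial (Nat.le_add_right r s)
  rw [Nat.add_sub_cancel_left] at this
  rw [← this]
  ring

lemma det_as_sum_perm_rows {K : Type*} [CommRing K] {n : ℕ} (A : Matrix (Fin n) (Fin n) K) :
    A.det = ∑ σ : Equiv.Perm (Fin n), ((Equiv.Perm.sign σ : ℤ) : K) * ∏ i, A i (σ i) := by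
  rw [← Matrix.det_transpose A, Matrix.det_apply']
  rfl

lemma laplace_expansion {K : Type*} [CommRing K] {r s : ℕ}
    (M : Matrix (Fin (r+s)) (Fin (r+s)) K) :
    M.det = ∑ I ∈ (Finset.powersetCard r (Finset.univ : Finset (Fin (r+s)))).attach,
      ((Equiv.Perm.sign (lapPerm I.1 (Finset.mem_powersetCard.mp I.2).2) : ℤ) : K) *
        (Matrix.det (Matrix.of fun a c : Fin r =>
            M (Fin.castAdd s a) ↑(I.1.orderIsoOfFin (Finset.mem_powersetCard.mp I.2).2 c)) *
         Matrix.det (Matrix.of fun a c : Fin s =>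
            M (Fin.natAdd r a)
              ↑((I.1ᶜ).orderIsoOfFin
                  (lap_compl_card I.1 (Finset.mem_powersetCard.mp I.2).2) c))) := by
  have key := Fintype.sum_bijective _ (lapPhi_bijective (r := r) (s := s))
    (fun t => ((Equiv.Perm.sign
        (lapPhi t.1.1 (Finset.mem_powersetCard.mp t.1.2).2 t.2.1 t.2.2) : ℤ) : K) *
      ∏ i, M i (lapPhi t.1.1 (Finset.mem_powersetCard.mp t.1.2).2 t.2.1 t.2.2 i))
    (fun σ => ((Equiv.Perm.sign σ : ℤ) : K) * ∏ i, M i (σ i))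
    (fun t => rfl)
  rw [det_as_sum_perm_rows, ← key, ← Finset.univ_sigma_univ, Finset.sum_sigma]
  refine Finset.sum_congr rfl fun I _ => ?_
  set hI := (Finset.mem_powersetCard.mp I.2).2 with hhI
  rw [Fintype.sum_prod_type]
  have hterm : ∀ (τ : Equiv.Perm (Fin r)) (ρ : Equiv.Perm (Fin s)),
      ((Equiv.Perm.sign (lapPhi I.1 hI τ ρ) : ℤ) : K) * ∏ i, M i (lapPhi I.1 hI τ ρ i)
        = ((Equiv.Perm.sign (lapPerm I.1 hI) : ℤ) : K) *
          ((((Equiv.Perm.sign τ : ℤ) : K) *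
              ∏ a : Fin r, M (Fin.castAdd s a) ↑(I.1.orderIsoOfFin hI (τ a))) *
           (((Equiv.Perm.sign ρ : ℤ) : K) *
              ∏ b : Fin s, M (Fin.natAdd r b)
                ↑((I.1ᶜ).orderIsoOfFin (lap_compl_card I.1 hI) (ρ b)))) := by
    intro τ ρ
    rw [Fin.prod_univ_add (f := fun i => M i (lapPhi I.1 hI τ ρ i))]
    simp only [lapPhi_castAdd, lapPhi_natAdd, sign_lapPhi]
    push_cast
    ring
  calc ∑ τ : Equiv.Perm (Fin r), ∑ ρ : Equiv.Perm (Fin s),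
        ((Equiv.Perm.sign (lapPhi I.1 hI τ ρ) : ℤ) : K) * ∏ i, M i (lapPhi I.1 hI τ ρ i)
      = ((Equiv.Perm.sign (lapPerm I.1 hI) : ℤ) : K) *
          ((∑ τ : Equiv.Perm (Fin r), ((Equiv.Perm.sign τ : ℤ) : K) *
              ∏ a : Fin r, M (Fin.castAdd s a) ↑(I.1.orderIsoOfFin hI (τ a))) *
           (∑ ρ : Equiv.Perm (Fin s), ((Equiv.Perm.sign ρ : ℤ) : K) *
              ∏ b : Fin s, M (Fin.natAdd r b)
                ↑((I.1ᶜ).orderIsoOfFin (lap_compl_card I.1 hI) (ρ b)))) := by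
        rw [Finset.sum_mul_sum, Finset.mul_sum]
        refine Finset.sum_congr rfl fun τ _ => ?_
        rw [Finset.mul_sum]
        exact Finset.sum_congr rfl fun ρ _ => hterm τ ρ
    _ = _ := by
        rw [det_as_sum_perm_rows (Matrix.of fun a c : Fin r =>
              M (Fin.castAdd s a) ↑(I.1.orderIsoOfFin hI c)),
            det_as_sum_perm_rows (Matrix.of fun a c : Fin s =>
              M (Fin.natAdd r a) ↑((I.1ᶜ).orderIsoOfFin (lap_compl_card I.1 hI) c))]
        simp only [Matrix.of_apply]

@[simp] lemma lapPerm_castAdd {r s : ℕ} (I : Finset (Fin (r+s))) (hI : I.card = r) (a : Fin r) :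
    lapPerm I hI (Fin.castAdd s a) = ↑(I.orderIsoOfFin hI a) := by
  simp [lapPerm, finSumFinEquiv_symm_apply_castAdd]

@[simp] lemma lapPerm_natAdd {r s : ℕ} (I : Finset (Fin (r+s))) (hI : I.card = r) (b : Fin s) :
    lapPerm I hI (Fin.natAdd r b) = ↑(Iᶜ.orderIsoOfFin (lap_compl_card I hI) b) := by
  simp [lapPerm, finSumFinEquiv_symm_apply_natAdd]

lemma pow_entry_aux {K : Type*} [Field K] (x y : K) (hx : x ≠ 0) (n d a μ : ℕ)
    (ha : a + 1 ≤ n) :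
    x ^ d * y ^ μ * x ^ (n - 1 - a) = x ^ (n - 1 + d) * (y ^ μ * x⁻¹ ^ a) := by
  have h1 : x ^ (n - 1 + d) * (x ^ a)⁻¹ = x ^ (n - 1 + d - a) := (pow_sub₀ x hx (by omega)).symm
  calc x ^ d * y ^ μ * x ^ (n - 1 - a) = y ^ μ * (x ^ d * x ^ (n - 1 - a)) := by ring
    _ = y ^ μ * x ^ (d + (n - 1 - a)) := by rw [← pow_add]
    _ = y ^ μ * x ^ (n - 1 + d - a) := by congr 2; omega
    _ = y ^ μ * (x ^ (n - 1 + d) * (x ^ a)⁻¹) := by rw [h1]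
    _ = x ^ (n - 1 + d) * (y ^ μ * x⁻¹ ^ a) := by rw [inv_pow]; ring



/-- The stable Grothendieck polynomial `G_λ(x_1,…,x_r)` evaluated at field elements,
via the bialternant formula
`G_λ(x) = det(x_j^{λ_i+r-i}(1-x_j)^{i-1}) / det(x_j^{r-i})`. -/
noncomputable def grothVal {K : Type*} [Field K] (r : ℕ) (lam : Fin r → ℕ)
    (w : Fin r → K) : K :=
  Matrix.det (Matrix.of fun i j : Fin r =>
      w j ^ (lam i + (r - 1 - (i : ℕ))) * (1 - w j) ^ (i : ℕ)) /
  Matrix.det (Matrix.of fun i j : Fin r => w j ^ (r - 1 - (i : ℕ)))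

/-- The generalized Schur function `s_{(f_1,…,f_r)}(z_1,…,z_N)` attached to functions
`f_1,…,f_r` (e.g. Laurent polynomials): `det(M) / det(z_j^{N-i})` where `M_{i,j} =
f_i(z_j)·z_j^{N-i}` for `i ≤ r` and `M_{i,j} = z_j^{N-i}` for `i > r`. -/
noncomputable def genSchurFun {K : Type*} [Field K] (N r : ℕ) (f : Fin r → K → K)
    (z : Fin N → K) : K :=
  Matrix.det (Matrix.of fun i j : Fin N =>
      (if h : (i : ℕ) < r then f ⟨i, h⟩ (z j) else 1) * z j ^ ((N : ℤ) - 1 - ((i : ℕ) : ℤ))) /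
  Matrix.det (Matrix.of fun i j : Fin N => z j ^ ((N : ℤ) - 1 - ((i : ℕ) : ℤ)))

/-- For pairwise distinct nonzero `z_1,…,z_N` in a field, a partition `λ`
with `r` parts and `d ≥ 0`, setting `f_i(z) = z^d (1 - z⁻¹)^{λ_i + r - i}`, one has
`Σ_{|I| = r} G_λ((1 - z_i⁻¹)_{i∈I}) ∏_{i∈I} (z_i^{N-r+d} / ∏_{j∉I}(z_i - z_j))
  = s_{(f_1,…,f_r)}(z_1,…,z_N)`. -/
lemma per_subset {K : Type*} [Field K] {r s : ℕ} (hr : 1 ≤ r) (d : ℕ)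
    (z : Fin (r+s) → K) (hz : Function.Injective z) (hz0 : ∀ i, z i ≠ 0)
    (lam : Fin r → ℕ) (I : Finset (Fin (r+s))) (hI : I.card = r) :
    ((grothVal r lam fun a => 1 - (z ↑(I.orderIsoOfFin hI a))⁻¹) *
        ∏ i ∈ I, (z i ^ ((((r+s) : ℕ) : ℤ) - (r : ℤ) + (d : ℤ)) / ∏ j ∈ Iᶜ, (z i - z j))) *
      (∏ i : Fin (r+s), ∏ j ∈ Finset.Ioi i, (z i - z j)) =
    ((Equiv.Perm.sign (lapPerm I hI) : ℤ) : K) *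
      ((Matrix.of fun a c : Fin r =>
          (Matrix.of fun i j : Fin (r+s) =>
            (if h : (i : ℕ) < r then
                z j ^ d * (1 - (z j)⁻¹) ^ (lam ⟨(i : ℕ), h⟩ + (r - 1 - (i : ℕ)))
              else 1) * z j ^ (r + s - 1 - (i : ℕ)))
            (Fin.castAdd s a) ↑(I.orderIsoOfFin hI c)).det *
       (Matrix.of fun a c : Fin s =>
          (Matrix.of fun i j : Fin (r+s) =>
            (if h : (i : ℕ) < r then
                z j ^ d * (1 - (z j)⁻¹) ^ (lam ⟨(i : ℕ), h⟩ + (r - 1 - (i : ℕ)))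
              else 1) * z j ^ (r + s - 1 - (i : ℕ)))
            (Fin.natAdd r a) ↑(Iᶜ.orderIsoOfFin (lap_compl_card I hI) c)).det) := by
  classical
  have hmemI : ∀ a : Fin r, (↑(I.orderIsoOfFin hI a) : Fin (r+s)) ∈ I :=
    fun a => (I.orderIsoOfFin hI a).2
  have hmemC : ∀ b : Fin s,
      (↑(Iᶜ.orderIsoOfFin (lap_compl_card I hI) b) : Fin (r+s)) ∈ Iᶜ :=
    fun b => (Iᶜ.orderIsoOfFin (lap_compl_card I hI) b).2
  have hzsub : ∀ i j : Fin (r+s), i ≠ j → z i - z j ≠ 0 := fun i j hij =>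
    sub_ne_zero.mpr (fun h => hij (hz h))
  have hιinj : Function.Injective (fun a : Fin r => (↑(I.orderIsoOfFin hI a) : Fin (r+s))) :=
    fun a b hab => (I.orderIsoOfFin hI).injective (Subtype.ext hab)
  set w : Fin r → K := fun a => 1 - (z ↑(I.orderIsoOfFin hI a))⁻¹ with hwdef
  set V : K := ∏ i : Fin (r+s), ∏ j ∈ Finset.Ioi i, (z i - z j) with hV
  set P : K := ∏ a : Fin r, ∏ b ∈ Finset.Ioi a,
    (z ↑(I.orderIsoOfFin hI a) - z ↑(I.orderIsoOfFin hI b)) with hP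
  set Q : K := ∏ a : Fin s, ∏ b ∈ Finset.Ioi a,
    (z ↑(Iᶜ.orderIsoOfFin (lap_compl_card I hI) a) -
      z ↑(Iᶜ.orderIsoOfFin (lap_compl_card I hI) b)) with hQ
  set R : K := ∏ a : Fin r, ∏ b : Fin s,
    (z ↑(I.orderIsoOfFin hI a) - z ↑(Iᶜ.orderIsoOfFin (lap_compl_card I hI) b)) with hR
  set εK : K := ((Equiv.Perm.sign (lapPerm I hI) : ℤ) : K) with hεK
  -- the top block
  have hTop : (Matrix.of fun a c : Fin r =>
        (Matrix.of fun i j : Fin (r+s) =>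
          (if h : (i : ℕ) < r then
              z j ^ d * (1 - (z j)⁻¹) ^ (lam ⟨(i : ℕ), h⟩ + (r - 1 - (i : ℕ)))
            else 1) * z j ^ (r + s - 1 - (i : ℕ)))
          (Fin.castAdd s a) ↑(I.orderIsoOfFin hI c))
      = Matrix.of fun a c : Fin r => z ↑(I.orderIsoOfFin hI c) ^ (r + s - 1 + d) *
          (w c ^ (lam a + (r - 1 - (a : ℕ))) * (1 - w c) ^ (a : ℕ)) := by
    ext a c
    simp only [Matrix.of_apply, Fin.coe_castAdd]
    rw [dif_pos a.isLt]
    simp only [Fin.eta, hwdef]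
    have h1w : 1 - (1 - (z ↑(I.orderIsoOfFin hI c))⁻¹) = (z ↑(I.orderIsoOfFin hI c))⁻¹ := by
      ring
    rw [h1w]
    exact pow_entry_aux _ _ (hz0 _) (r+s) d a _ (by have := a.isLt; omega)
  -- the bottom block
  have hBot : (Matrix.of fun a c : Fin s =>
        (Matrix.of fun i j : Fin (r+s) =>
          (if h : (i : ℕ) < r then
              z j ^ d * (1 - (z j)⁻¹) ^ (lam ⟨(i : ℕ), h⟩ + (r - 1 - (i : ℕ)))
            else 1) * z j ^ (r + s - 1 - (i : ℕ)))
          (Fin.natAdd r a) ↑(Iᶜ.orderIsoOfFin (lap_compl_card I hI) c))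
      = Matrix.of fun a c : Fin s =>
          z ↑(Iᶜ.orderIsoOfFin (lap_compl_card I hI) c) ^ (s - 1 - (a : ℕ)) := by
    ext a c
    simp only [Matrix.of_apply, Fin.coe_natAdd]
    rw [dif_neg (by omega), one_mul]
    congr 1
    omega
  -- Grothendieck denominator
  set GD : K := Matrix.det (Matrix.of fun i j : Fin r => w j ^ (r - 1 - (i : ℕ))) with hGDdef
  have hGDval : GD = ∏ a : Fin r, ∏ b ∈ Finset.Ioi a, (w a - w b) := det_rev_vandermonde w
  have hwinj : Function.Injective w := by
    intro a b hab
    rw [hwdef] at hab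
    simp only at hab
    have h2 : (z ↑(I.orderIsoOfFin hI a))⁻¹ = (z ↑(I.orderIsoOfFin hI b))⁻¹ := by
      rw [← sub_sub_cancel 1 (z ↑(I.orderIsoOfFin hI a))⁻¹, hab, sub_sub_cancel]
    exact hιinj (hz (inv_injective h2))
  have hGDne : GD ≠ 0 := by
    rw [hGDval]
    refine Finset.prod_ne_zero_iff.mpr fun a _ => Finset.prod_ne_zero_iff.mpr fun b hb => ?_
    exact sub_ne_zero.mpr fun h => (Fin.ne_of_lt (Finset.mem_Ioi.mp hb)) (hwinj h)
  have hGN : grothVal r lam w * GD =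
      Matrix.det (fun i j : Fin r =>
        w j ^ (lam i + (r - 1 - (i : ℕ))) * (1 - w j) ^ (i : ℕ)) := by
    rw [grothVal, hGDdef]
    exact div_mul_cancel₀ _ hGDne
  -- GD in terms of P
  have hfact : ∀ a b : Fin r, w a - w b =
      (z ↑(I.orderIsoOfFin hI a) - z ↑(I.orderIsoOfFin hI b)) *
        ((z ↑(I.orderIsoOfFin hI a))⁻¹ * (z ↑(I.orderIsoOfFin hI b))⁻¹) := by
    intro a b
    rw [hwdef]
    simp only
    have hza := hz0 (↑(I.orderIsoOfFin hI a) : Fin (r+s))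
    have hzb := hz0 (↑(I.orderIsoOfFin hI b) : Fin (r+s))
    set x := z (↑(I.orderIsoOfFin hI a) : Fin (r+s)) with hx
    set y := z (↑(I.orderIsoOfFin hI b) : Fin (r+s)) with hy
    have expand : (x - y) * (x⁻¹ * y⁻¹) = y⁻¹ - x⁻¹ := by
      rw [sub_mul, show x * (x⁻¹ * y⁻¹) = x * x⁻¹ * y⁻¹ by ring,
        show y * (x⁻¹ * y⁻¹) = y * y⁻¹ * x⁻¹ by ring,
        mul_inv_cancel₀ hza, mul_inv_cancel₀ hzb, one_mul, one_mul]
    rw [expand]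
    ring
  have hGD2 : GD = P * ∏ a : Fin r, ((z ↑(I.orderIsoOfFin hI a))⁻¹) ^ (r - 1) := by
    rw [hGDval, hP, ← prod_pair_mul (fun a => (z ↑(I.orderIsoOfFin hI a))⁻¹),
      ← Finset.prod_mul_distrib]
    refine Finset.prod_congr rfl fun a _ => ?_
    rw [← Finset.prod_mul_distrib]
    exact Finset.prod_congr rfl fun b _ => hfact a b
  -- the shuffle identity
  have h1 := det_rev_vandermonde (fun j => z (lapPerm I hI j))
  have h2 : Matrix.det (Matrix.of fun i j : Fin (r+s) =>
      z (lapPerm I hI j) ^ (r + s - 1 - (i : ℕ))) = εK * V := by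
    have h3 : (Matrix.of fun i j : Fin (r+s) => z (lapPerm I hI j) ^ (r + s - 1 - (i : ℕ)))
        = (Matrix.of fun i j : Fin (r+s) =>
            z j ^ (r + s - 1 - (i : ℕ))).submatrix id ⇑(lapPerm I hI) := rfl
    rw [h3, Matrix.det_permute', det_rev_vandermonde z, ← hV, hεK]
  have hsplit : ∏ i : Fin (r+s), ∏ j ∈ Finset.Ioi i,
      (z (lapPerm I hI i) - z (lapPerm I hI j)) = (P * Q) * R := by
    rw [prod_pairs_add r s (fun i j => z (lapPerm I hI i) - z (lapPerm I hI j))]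
    simp only [lapPerm_castAdd, lapPerm_natAdd]
    rfl
  have hstar : (P * Q) * R = εK * V := by rw [← hsplit, ← h1, h2]
  have hεε : εK * εK = 1 := by
    rw [hεK]
    rcases Int.units_eq_one_or (Equiv.Perm.sign (lapPerm I hI)) with h | h <;>
      rw [h] <;> norm_num
  have hVPQ : V = εK * ((P * Q) * R) := by rw [hstar, ← mul_assoc, hεε, one_mul]
  have hRne : R ≠ 0 := by
    rw [hR]
    refine Finset.prod_ne_zero_iff.mpr fun a _ => Finset.prod_ne_zero_iff.mpr fun b _ => ?_
    refine hzsub _ _ fun h => ?_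
    exact (Finset.mem_compl.mp (hmemC b)) (h ▸ hmemI a)
  -- reindex the subset product
  have hconvI : ∀ (f : Fin (r+s) → K), ∏ i ∈ I, f i = ∏ a : Fin r, f ↑(I.orderIsoOfFin hI a) := by
    intro f
    rw [← Finset.prod_coe_sort I f]
    exact (Equiv.prod_comp (I.orderIsoOfFin hI).toEquiv (fun x => f ↑x)).symm
  have hconvC : ∀ (f : Fin (r+s) → K), ∏ j ∈ Iᶜ, f j
      = ∏ b : Fin s, f ↑(Iᶜ.orderIsoOfFin (lap_compl_card I hI) b) := by
    intro f
    rw [← Finset.prod_coe_sort Iᶜ f]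
    exact (Equiv.prod_comp (Iᶜ.orderIsoOfFin (lap_compl_card I hI)).toEquiv (fun x => f ↑x)).symm
  have hzpow : ∀ i : Fin (r+s),
      z i ^ ((((r+s) : ℕ) : ℤ) - (r : ℤ) + (d : ℤ)) = z i ^ (s + d) := by
    intro i
    rw [show (((r+s) : ℕ) : ℤ) - (r : ℤ) + (d : ℤ) = ((s + d : ℕ) : ℤ) by push_cast; ring,
      zpow_natCast]
  have hLHSprod : ∏ i ∈ I, (z i ^ ((((r+s) : ℕ) : ℤ) - (r : ℤ) + (d : ℤ)) / ∏ j ∈ Iᶜ, (z i - z j))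
      = (∏ a : Fin r, z ↑(I.orderIsoOfFin hI a) ^ (s + d)) / R := by
    rw [hconvI, Finset.prod_div_distrib]
    congr 1
    · exact Finset.prod_congr rfl fun a _ => hzpow _
    · rw [hR]
      exact Finset.prod_congr rfl fun a _ => hconvC _
  have hZ : ∏ a : Fin r, z ↑(I.orderIsoOfFin hI a) ^ (s + d)
      = (∏ a : Fin r, z ↑(I.orderIsoOfFin hI a) ^ (r + s - 1 + d)) *
        ∏ a : Fin r, ((z ↑(I.orderIsoOfFin hI a))⁻¹) ^ (r - 1) := by
    rw [← Finset.prod_mul_distrib]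
    refine Finset.prod_congr rfl fun a _ => ?_
    rw [inv_pow, ← pow_sub₀ _ (hz0 _) (by omega)]
    congr 1
    omega
  have hBotdet : (Matrix.of fun a c : Fin s =>
      z ↑(Iᶜ.orderIsoOfFin (lap_compl_card I hI) c) ^ (s - 1 - (a : ℕ))).det = Q := by
    rw [hQ]
    exact det_rev_vandermonde _
  -- final assembly
  have hTR : (∏ i ∈ I, (z i ^ ((((r+s) : ℕ) : ℤ) - (r : ℤ) + (d : ℤ)) / ∏ j ∈ Iᶜ, (z i - z j))) * R
      = (∏ a : Fin r, z ↑(I.orderIsoOfFin hI a) ^ (r + s - 1 + d)) *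
        ∏ a : Fin r, ((z ↑(I.orderIsoOfFin hI a))⁻¹) ^ (r - 1) := by
    rw [hLHSprod, div_mul_cancel₀ _ hRne, hZ]
  rw [hTop, hBot, Matrix.det_mul_row (fun c : Fin r => z ↑(I.orderIsoOfFin hI c) ^ (r + s - 1 + d))
    (fun (a c : Fin r) => w c ^ (lam a + (r - 1 - (a : ℕ))) * (1 - w c) ^ (a : ℕ)), ← hGN, hBotdet, hVPQ, hGD2]
  linear_combination (grothVal r lam w * εK * P * Q) * hTR

/-- For pairwise distinct nonzero `z_1,…,z_N` in a field, a partition `λ`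
with `r` parts and `d ≥ 0`, setting `f_i(z) = z^d (1 - z⁻¹)^{λ_i + r - i}`, one has
`Σ_{|I| = r} G_λ((1 - z_i⁻¹)_{i∈I}) ∏_{i∈I} (z_i^{N-r+d} / ∏_{j∉I}(z_i - z_j))
  = s_{(f_1,…,f_r)}(z_1,…,z_N)`. -/
theorem stmt2 {K : Type*} [Field K] (N r : ℕ) (hr : 1 ≤ r) (hrN : r ≤ N)
    (z : Fin N → K) (hz : Function.Injective z) (hz0 : ∀ i, z i ≠ 0)
    (lam : Fin r → ℕ) (hlam : Antitone lam) (d : ℕ) :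
    ∑ I ∈ (Finset.powersetCard r (Finset.univ : Finset (Fin N))).attach,
        grothVal r lam
            (fun a =>
              1 - (z ((I.1.orderIsoOfFin (Finset.mem_powersetCard.mp I.2).2 a : Fin N)))⁻¹) *
          ∏ i ∈ I.1, (z i ^ ((N : ℤ) - (r : ℤ) + (d : ℤ)) / ∏ j ∈ I.1ᶜ, (z i - z j)) =
      genSchurFun N r
        (fun i w => w ^ d * (1 - w⁻¹) ^ (lam i + (r - 1 - (i : ℕ)))) z := by
  obtain ⟨s, rfl⟩ : ∃ s, N = r + s := ⟨N - r, by omega⟩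
  have hzsub : ∀ i j : Fin (r+s), i ≠ j → z i - z j ≠ 0 := fun i j hij =>
    sub_ne_zero.mpr (fun h => hij (hz h))
  -- the full Vandermonde value
  set V : K := ∏ i : Fin (r+s), ∏ j ∈ Finset.Ioi i, (z i - z j) with hV
  have hVne : V ≠ 0 := by
    rw [hV]
    refine Finset.prod_ne_zero_iff.mpr fun i _ => Finset.prod_ne_zero_iff.mpr fun j hj => ?_
    exact hzsub i j (Fin.ne_of_lt (Finset.mem_Ioi.mp hj))
  -- denominator of the generalized Schur function
  have hD : Matrix.det (Matrix.of fun i j : Fin (r+s) =>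
      z j ^ (((r+s : ℕ) : ℤ) - 1 - ((i : ℕ) : ℤ))) = V := by
    have : (Matrix.of fun i j : Fin (r+s) => z j ^ (((r+s : ℕ) : ℤ) - 1 - ((i : ℕ) : ℤ)))
        = Matrix.of fun i j : Fin (r+s) => z j ^ ((r+s) - 1 - (i : ℕ)) := by
      ext i j
      simp only [Matrix.of_apply]
      rw [show ((r+s : ℕ) : ℤ) - 1 - ((i : ℕ) : ℤ) = (((r+s) - 1 - (i : ℕ) : ℕ) : ℤ) by
        have := i.isLt; omega, zpow_natCast]
    rw [this, det_rev_vandermonde]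
  -- numerator matrix with natural exponents
  have hM : (Matrix.of fun i j : Fin (r+s) =>
        (if h : (i : ℕ) < r then
            (fun (i : Fin r) (w : K) => w ^ d * (1 - w⁻¹) ^ (lam i + (r - 1 - (i : ℕ)))) ⟨i, h⟩
              (z j)
          else 1) * z j ^ (((r+s : ℕ) : ℤ) - 1 - ((i : ℕ) : ℤ)))
      = Matrix.of fun i j : Fin (r+s) =>
        (if h : (i : ℕ) < r then
            z j ^ d * (1 - (z j)⁻¹) ^ (lam ⟨i, h⟩ + (r - 1 - (i : ℕ)))
          else 1) * z j ^ ((r+s) - 1 - (i : ℕ)) := by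
    ext i j
    simp only [Matrix.of_apply]
    rw [show ((r+s : ℕ) : ℤ) - 1 - ((i : ℕ) : ℤ) = (((r+s) - 1 - (i : ℕ) : ℕ) : ℤ) by
      have := i.isLt; omega, zpow_natCast]
  rw [genSchurFun, hM, hD, laplace_expansion, eq_div_iff hVne, Finset.sum_mul]
  refine Finset.sum_congr rfl fun I _ => ?_
  exact per_subset hr d z hz hz0 lam I.1 (Finset.mem_powersetCard.mp I.2).2
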